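/- Let L be an abelian group and (A, m) an L-local integral domain (an L-graded domain with unique maximal homogeneous ideal m). Let I ⊆ A be a finitely generated homogeneous ideal such that for some prime ideal p of A containing m, the localized ideal I_p ⊆ A_p is principal generated by a nonzerodivisor (i.e., V(I) is a Cartier divisor at p). Then I is generated by a single homogeneous element of A. -/

import Mathlib

variable {L A : Type*} [AddCommGroup L] [DecidableEq L] [CommRing A]

/-- A maximal homogeneous ideal of an `L`-graded ring. -/
def IsMaximalHomogeneousIdeal (𝒜 : L → AddSubgroup A) [GradedRing 𝒜] (m : Ideal A) : Prop :=
  Ideal.IsHomogeneous 𝒜 m ∧ m ≠ ⊤ ∧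
    ∀ J : Ideal A, Ideal.IsHomogeneous 𝒜 J → m < J → J = ⊤

set_option linter.unusedVariables false

theorem isUnit_of_homogeneous_not_mem (𝒜 : L → AddSubgroup A) [GradedRing 𝒜]
    (m : Ideal A) (hm : IsMaximalHomogeneousIdeal 𝒜 m)
    (huniq : ∀ m' : Ideal A, IsMaximalHomogeneousIdeal 𝒜 m' → m' = m)
    (s : A) (hs : SetLike.IsHomogeneousElem 𝒜 s) (hsm : s ∉ m) : IsUnit s := by
  by_contra h
  set S : Set (Ideal A) := {J | Ideal.IsHomogeneous 𝒜 J ∧ s ∈ J ∧ J ≠ ⊤} with hS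
  have hspan : Ideal.span {s} ∈ S := by
    refine ⟨Ideal.homogeneous_span 𝒜 {s} ?_, Ideal.subset_span rfl, ?_⟩
    · rintro x rfl; exact hs
    · simpa [Ideal.span_singleton_eq_top] using h
  have hbound : ∀ c ⊆ S, IsChain (· ≤ ·) c → ∀ y ∈ c, ∃ ub ∈ S, ∀ z ∈ c, z ≤ ub := by
    intro c hc hchain y hy
    haveI : Nonempty c := ⟨⟨y, hy⟩⟩
    have hdir : Directed (· ≤ ·) (fun J : c => (J : Ideal A)) :=
      hchain.directedOn.directed_val
    refine ⟨sSup c, ⟨?_, ?_, ?_⟩, fun z hz => le_sSup hz⟩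
    · rw [sSup_eq_iSup']
      exact Ideal.IsHomogeneous.iSup fun J => (hc J.2).1
    · exact (le_sSup hy) (hc hy).2.1
    · intro htop
      have : (1 : A) ∈ sSup c := htop ▸ Submodule.mem_top
      rw [sSup_eq_iSup', Submodule.mem_iSup_of_directed _ hdir] at this
      obtain ⟨J, hJ⟩ := this
      exact (hc J.2).2.2 (Ideal.eq_top_of_isUnit_mem _ hJ isUnit_one)
  obtain ⟨M, -, hMmax⟩ := zorn_le_nonempty₀ S hbound _ hspan
  · obtain ⟨hMhom, hsM, hMne⟩ := hMmax.prop
    have : IsMaximalHomogeneousIdeal 𝒜 M := by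
      refine ⟨hMhom, hMne, fun J hJ hMJ => ?_⟩
      by_contra hJne
      exact absurd (hMmax.2 ⟨hJ, hMJ.le hsM, hJne⟩ hMJ.le) (not_le_of_gt hMJ)
    exact hsm ((huniq M this) ▸ hsM)

/-- Characterization of equivariant Cartier divisors: over an `L`-local integral domain
`(A, m)`, a finitely generated homogeneous ideal `I` which becomes principal, generated
by a nonzerodivisor, after localizing at some prime `p ⊇ m` is globally generated by a
single homogeneous element. -/
theorem homogeneous_ideal_principal_of_cartier (𝒜 : L → AddSubgroup A) [GradedRing 𝒜]
    [IsDomain A]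
    (m : Ideal A) (hm : IsMaximalHomogeneousIdeal 𝒜 m)
    (huniq : ∀ m' : Ideal A, IsMaximalHomogeneousIdeal 𝒜 m' → m' = m)
    (I : Ideal A) (hIfg : I.FG) (hIhom : Ideal.IsHomogeneous 𝒜 I)
    (p : Ideal A) [p.IsPrime] (hmp : m ≤ p)
    (x : Localization.AtPrime p)
    (hx : Ideal.map (algebraMap A (Localization.AtPrime p)) I = Ideal.span {x})
    (hxnzd : x ∈ nonZeroDivisors (Localization.AtPrime p)) :
    ∃ f : A, (∃ n : L, f ∈ 𝒜 n) ∧ I = Ideal.span {f} := by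
  have hunits : ∀ s : A, SetLike.IsHomogeneousElem 𝒜 s → s ∉ m → IsUnit s :=
    fun s hs hsm => isUnit_of_homogeneous_not_mem 𝒜 m hm huniq s hs hsm
  classical
  set φ := algebraMap A (Localization.AtPrime p) with hφ
  have hle : p.primeCompl ≤ nonZeroDivisors A := fun a ha =>
    mem_nonZeroDivisors_of_ne_zero (fun h0 => ha (h0 ▸ p.zero_mem))
  have hφinj : Function.Injective φ := IsLocalization.injective (Localization.AtPrime p) hle
  -- homogeneous generating finset
  obtain ⟨G, hG⟩ := hIfg
  set S : Finset A := G.biUnion (fun g =>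
    (DirectSum.decompose 𝒜 g).support.image (fun n => (DirectSum.decompose 𝒜 g n : A))) with hSdef
  have hShom : ∀ y ∈ S, SetLike.IsHomogeneousElem 𝒜 y := by
    intro y hy
    simp only [hSdef, Finset.mem_biUnion, Finset.mem_image] at hy
    obtain ⟨g, -, n, -, rfl⟩ := hy
    exact ⟨n, (DirectSum.decompose 𝒜 g n).2⟩
  have hSsub : (↑S : Set A) ⊆ I := by
    intro y hy
    simp only [hSdef, Finset.mem_coe, Finset.mem_biUnion, Finset.mem_image] at hy
    obtain ⟨g, hg, n, -, rfl⟩ := hy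
    exact hIhom n (hG ▸ Ideal.subset_span hg)
  have hSspan : Ideal.span (↑S : Set A) = I := by
    refine le_antisymm (Ideal.span_le.2 hSsub) ?_
    rw [← hG, Ideal.span_le]
    intro g hg
    rw [← DirectSum.sum_support_decompose 𝒜 g]
    refine Ideal.sum_mem _ fun n hn => Ideal.subset_span ?_
    simp only [hSdef, Finset.mem_coe, Finset.mem_biUnion, Finset.mem_image]
    exact ⟨g, hg, n, hn, rfl⟩
  -- each generator maps into span {x}
  have hmemx : ∀ g ∈ S, φ g ∈ Ideal.span {x} := fun g hg =>
    hx ▸ Ideal.mem_map_of_mem φ (hSsub hg)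
  choose u hu using fun (g : A) (hg : g ∈ S) =>
    (Ideal.mem_span_singleton'.1 (hmemx g hg))
  -- some coefficient is a unit
  have hex : ∃ g : A, ∃ hg : g ∈ S, IsUnit (u g hg) := by
    by_contra hc
    push_neg at hc
    have h1 : x ∈ Ideal.span (φ '' ↑S) := by
      have : x ∈ Ideal.map φ I := hx ▸ Ideal.mem_span_singleton_self x
      rwa [← hSspan, Ideal.map_span] at this
    have hJ : Ideal.span (φ '' ↑S) ≤
        (IsLocalRing.maximalIdeal (Localization.AtPrime p)) *
          (Ideal.span {x} : Ideal (Localization.AtPrime p)) := by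
      rw [Ideal.span_le]
      rintro y ⟨g, hg, rfl⟩
      rw [SetLike.mem_coe, Ideal.mem_mul_span_singleton]
      exact ⟨u g hg, (IsLocalRing.mem_maximalIdeal _).2 (hc g hg), hu g hg⟩
    have hxmem := hJ h1
    rw [Ideal.mem_mul_span_singleton] at hxmem
    obtain ⟨t, ht, htx⟩ := hxmem
    have h0 : t - 1 = 0 := hxnzd.2 (t - 1) (by rw [sub_mul, one_mul, htx, sub_self])
    have ht1 : t = 1 := by linear_combination h0
    exact (IsLocalRing.maximalIdeal.isMaximal _).ne_top
      (Ideal.eq_top_of_isUnit_mem _ (ht1 ▸ ht) isUnit_one)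
  obtain ⟨f, hfS, hfu⟩ := hex
  obtain ⟨df, hfdeg⟩ := hShom f hfS
  -- span {x} = span {φ f}
  obtain ⟨v, hv⟩ := hfu
  have hspanfx : Ideal.span {φ f} = Ideal.span ({x} : Set (Localization.AtPrime p)) := by
    refine le_antisymm ?_ ?_
    · rw [Ideal.span_singleton_le_span_singleton]
      exact ⟨u f hfS, by rw [mul_comm, hu f hfS]⟩
    · rw [Ideal.span_singleton_le_span_singleton]
      refine ⟨(↑v⁻¹ : Localization.AtPrime p), ?_⟩
      rw [← hu f hfS, ← hv, mul_comm (↑v : Localization.AtPrime p) x, mul_assoc,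
        Units.mul_inv, mul_one]
  -- every generator is in span {f}
  have hgen : ∀ g ∈ S, g ∈ Ideal.span ({f} : Set A) := by
    intro g hg
    obtain ⟨dg, hgdeg⟩ := hShom g hg
    have hgx : φ g ∈ Ideal.span {φ f} := hspanfx ▸ hmemx g hg
    obtain ⟨c, hc⟩ := Ideal.mem_span_singleton'.1 hgx
    obtain ⟨⟨a, s⟩, hs⟩ := IsLocalization.surj p.primeCompl c
    have heq : (s : A) * g = a * f := by
      apply hφinj
      rw [map_mul, map_mul, ← hc, ← hs]
      ring
    -- find homogeneous component of s not in m
    have hsnm : (s : A) ∉ m := fun h => s.2 (hmp h)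
    have hcomp : ∃ n : L, (DirectSum.decompose 𝒜 (s : A) n : A) ∉ m := by
      by_contra hall
      push_neg at hall
      exact hsnm (by
        rw [← DirectSum.sum_support_decompose 𝒜 (s : A)]
        exact Ideal.sum_mem _ fun n _ => hall n)
    obtain ⟨n, hn⟩ := hcomp
    set sn : A := (DirectSum.decompose 𝒜 (s : A) n : A) with hsn
    have hsnunit : IsUnit sn := hunits sn ⟨n, (DirectSum.decompose 𝒜 (s : A) n).2⟩ hn
    -- take components of the equation
    have hkey : sn * g = (DirectSum.decompose 𝒜 a (n + dg - df) : A) * f := by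
      have h1 : (DirectSum.decompose 𝒜 ((s : A) * g) (n + dg) : A) = sn * g :=
        DirectSum.coe_decompose_mul_add_of_right_mem 𝒜 hgdeg
      have h2 : (DirectSum.decompose 𝒜 (a * f) ((n + dg - df) + df) : A)
          = (DirectSum.decompose 𝒜 a (n + dg - df) : A) * f :=
        DirectSum.coe_decompose_mul_add_of_right_mem 𝒜 hfdeg
      rw [sub_add_cancel] at h2
      rw [← h1, ← h2, heq]
    obtain ⟨w, hw⟩ := hsnunit.exists_left_inv
    rw [Ideal.mem_span_singleton']
    refine ⟨w * (DirectSum.decompose 𝒜 a (n + dg - df) : A), ?_⟩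
    calc w * (DirectSum.decompose 𝒜 a (n + dg - df) : A) * f
        = w * (sn * g) := by rw [mul_assoc, ← hkey]
      _ = (w * sn) * g := by ring
      _ = g := by rw [hw, one_mul]
  refine ⟨f, ⟨df, hfdeg⟩, le_antisymm ?_ ?_⟩
  · rw [← hSspan]; exact Ideal.span_le.2 hgen
  · exact Ideal.span_le.2 (by rintro y rfl; exact hSsub hfS)
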